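/- Lemma (Model 4 exchange coefficients under mutation substitution): In F, with Y₁'' = (x₆⁴+x₁x₂x₃x₆+2x₄x₅x₆²+x₄²x₅²)/(x₁x₃x₄), Y₃'' = (x₄x₅+x₆²)/x₃ and Y₄'' = (x₁x₂x₃+x₄x₅x₆+x₆³)/(x₃x₄), the following five identities hold: (Y₃''x₅+Y₄''x₆)/(Y₁''x₂) = x₁/x₂; (Y₁''x₆+x₂x₅)/(Y₃''Y₄'') = x₃/x₁; (Y₁''Y₃''+x₂Y₄'')/(x₅x₆) = (x₆⁶+2x₁x₂x₃x₆³+x₁²x₂²x₃²+3x₄x₅x₆⁴+2x₁x₂x₃x₄x₅x₆+3x₄²x₅²x₆²+x₄³x₅³)/(x₁x₃²x₄x₅x₆); (Y₁''Y₃''x₆+x₂Y₃''x₅+x₂Y₄''x₆)/(Y₁''Y₄''x₅) = x₄/x₅; and (x₂Y₄''x₅+Y₁''Y₃''x₅+Y₁''Y₄''x₆)/(x₂Y₃''x₆) = (x₆⁶+2x₁x₂x₃x₆³+x₁²x₂²x₃²+3x₄x₅x₆⁴+3x₁x₂x₃x₄x₅x₆+3x₄²x₅²x₆²+x₄³x₅³)/(x₁x₂x₃x₄²x₆).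 (These say that substituting x₁ ↦ Y₁'', x₃ ↦ Y₃'', x₄ ↦ Y₄'' into the five Model 1 coefficients A, B, C, D, E of Theorem 3.1 produces the five Model 4 coefficients of Theorem 3.4.) -/
import Mathlib


noncomputable section

open MvPolynomial

abbrev F : Type := FractionRing (MvPolynomial (Fin 6) ℚ)

/-- The images of the six indeterminates in the field `F = ℚ(x₁,…,x₆)`. -/
def xv (t : Fin 6) : F := algebraMap (MvPolynomial (Fin 6) ℚ) F (X t)

def x1 : F := xv 0
def x2 : F := xv 1
def x3 : F := xv 2
def x4 : F := xv 3
def x5 : F := xv 4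
def x6 : F := xv 5

/-- Chooses among six field elements according to the residue of `2(i-j)+3k` mod 6:
residues 5,2,4,1,3,0 select the 1st,…,6th element respectively. -/
def pick (v1 v2 v3 v4 v5 v6 : F) (i j k : ℤ) : F :=
  if (2*(i-j)+3*k) % 6 = 5 then v1
  else if (2*(i-j)+3*k) % 6 = 2 then v2
  else if (2*(i-j)+3*k) % 6 = 4 then v3
  else if (2*(i-j)+3*k) % 6 = 1 then v4
  else if (2*(i-j)+3*k) % 6 = 3 then v5
  else v6

/-- α(i,j,k) = ⌊(P+i+2j)/3⌋ with P = i²+ij+j²+1. -/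
def expA (i j : ℤ) : ℤ := Int.fdiv ((i^2+i*j+j^2+1) + i + 2*j) 3
/-- β(i,j,k) = ⌊(P+2i+j)/3⌋. -/
def expB (i j : ℤ) : ℤ := Int.fdiv ((i^2+i*j+j^2+1) + 2*i + j) 3
/-- γ(i,j,k) = ⌊P/3⌋. -/
def expC (i j : ℤ) : ℤ := Int.fdiv (i^2+i*j+j^2+1) 3
/-- δ(i,j,k) = ⌊(k−1)²/4⌋. -/
def expD (k : ℤ) : ℤ := Int.fdiv ((k-1)^2) 4
/-- ε(i,j,k) = ⌊k²/4⌋. -/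
def expE (k : ℤ) : ℤ := Int.fdiv (k^2) 4

def Y1'' : F := (x6^4 + x1*x2*x3*x6 + 2*x4*x5*x6^2 + x4^2*x5^2) / (x1*x3*x4)
def Y3'' : F := (x4*x5 + x6^2) / x3
def Y4'' : F := (x1*x2*x3 + x4*x5*x6 + x6^3) / (x3*x4)


lemma algMap_inj : Function.Injective (algebraMap (MvPolynomial (Fin 6) ℚ) F) :=
  IsFractionRing.injective _ _

lemma xv_ne (t : Fin 6) : xv t ≠ 0 := by
  simp only [xv]
  intro h
  have := algMap_inj (h.trans (map_zero _).symm)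
  exact MvPolynomial.X_ne_zero t this

lemma poly_ne (P : MvPolynomial (Fin 6) ℚ)
    (h : MvPolynomial.eval (fun i => if i = 5 then (1:ℚ) else 0) P ≠ 0) :
    algebraMap (MvPolynomial (Fin 6) ℚ) F P ≠ 0 := by
  intro h0
  have : P = 0 := algMap_inj (h0.trans (map_zero _).symm)
  simp [this] at h

lemma n1_ne : x6^4 + x1*x2*x3*x6 + 2*x4*x5*x6^2 + x4^2*x5^2 ≠ 0 := by
  have : x6^4 + x1*x2*x3*x6 + 2*x4*x5*x6^2 + x4^2*x5^2 =
      algebraMap (MvPolynomial (Fin 6) ℚ) F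
        (X 5^4 + X 0*X 1*X 2*X 5 + 2*X 3*X 4*X 5^2 + X 3^2*X 4^2) := by
    simp [x1, x2, x3, x4, x5, x6, xv, map_add, map_mul, map_pow, map_ofNat]
  rw [this]
  apply poly_ne
  simp

lemma n3_ne : x4*x5 + x6^2 ≠ 0 := by
  have : x4*x5 + x6^2 =
      algebraMap (MvPolynomial (Fin 6) ℚ) F (X 3*X 4 + X 5^2) := by
    simp [x4, x5, x6, xv, map_add, map_mul, map_pow]
  rw [this]
  apply poly_ne
  simp

lemma n4_ne : x1*x2*x3 + x4*x5*x6 + x6^3 ≠ 0 := by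
  have : x1*x2*x3 + x4*x5*x6 + x6^3 =
      algebraMap (MvPolynomial (Fin 6) ℚ) F (X 0*X 1*X 2 + X 3*X 4*X 5 + X 5^3) := by
    simp [x1, x2, x3, x4, x5, x6, xv, map_add, map_mul, map_pow]
  rw [this]
  apply poly_ne
  simp

set_option maxHeartbeats 4000000 in
/-- Lemma: Model 4 exchange coefficients under the mutation substitution
x₁ ↦ Y₁'', x₃ ↦ Y₃'', x₄ ↦ Y₄''. -/
theorem model4_coefficients_substitution :
    (Y3''*x5 + Y4''*x6) / (Y1''*x2) = x1 / x2 ∧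
    (Y1''*x6 + x2*x5) / (Y3''*Y4'') = x3 / x1 ∧
    (Y1''*Y3'' + x2*Y4'') / (x5*x6) =
      (x6^6 + 2*x1*x2*x3*x6^3 + x1^2*x2^2*x3^2 + 3*x4*x5*x6^4
        + 2*x1*x2*x3*x4*x5*x6 + 3*x4^2*x5^2*x6^2 + x4^3*x5^3) / (x1*x3^2*x4*x5*x6) ∧
    (Y1''*Y3''*x6 + x2*Y3''*x5 + x2*Y4''*x6) / (Y1''*Y4''*x5) = x4 / x5 ∧
    (x2*Y4''*x5 + Y1''*Y3''*x5 + Y1''*Y4''*x6) / (x2*Y3''*x6) =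
      (x6^6 + 2*x1*x2*x3*x6^3 + x1^2*x2^2*x3^2 + 3*x4*x5*x6^4
        + 3*x1*x2*x3*x4*x5*x6 + 3*x4^2*x5^2*x6^2 + x4^3*x5^3) / (x1*x2*x3*x4^2*x6) := by
  have h1 : x1 ≠ 0 := xv_ne 0
  have h2 : x2 ≠ 0 := xv_ne 1
  have h3 : x3 ≠ 0 := xv_ne 2
  have h4 : x4 ≠ 0 := xv_ne 3
  have h5 : x5 ≠ 0 := xv_ne 4
  have h6 : x6 ≠ 0 := xv_ne 5
  have hn1 := n1_ne
  have hn3 := n3_ne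
  have hn4 := n4_ne
  have hY1 : Y1'' ≠ 0 := div_ne_zero hn1 (by exact mul_ne_zero (mul_ne_zero h1 h3) h4)
  have hY3 : Y3'' ≠ 0 := div_ne_zero hn3 h3
  have hY4 : Y4'' ≠ 0 := div_ne_zero hn4 (mul_ne_zero h3 h4)
  refine ⟨?_, ?_, ?_, ?_, ?_⟩
  · rw [div_eq_div_iff (mul_ne_zero hY1 h2) h2, Y1'', Y3'', Y4'']
    field_simp
    ring_nf
    all_goals field_simp
    all_goals ring
  · rw [div_eq_div_iff (mul_ne_zero hY3 hY4) h1, Y1'', Y3'', Y4'']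
    field_simp
    ring_nf
    all_goals field_simp
    all_goals ring
  · rw [div_eq_div_iff (mul_ne_zero h5 h6)
      (by exact mul_ne_zero (mul_ne_zero (mul_ne_zero (mul_ne_zero h1 (pow_ne_zero 2 h3)) h4) h5) h6),
      Y1'', Y3'', Y4'']
    field_simp
    ring_nf
    all_goals field_simp
    all_goals ring
  · rw [div_eq_div_iff (mul_ne_zero (mul_ne_zero hY1 hY4) h5) h5, Y1'', Y3'', Y4'']
    field_simp
    ring_nf
    all_goals field_simp
    all_goals ring
  · rw [div_eq_div_iff (mul_ne_zero (mul_ne_zero h2 hY3) h6)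
      (by exact mul_ne_zero (mul_ne_zero (mul_ne_zero (mul_ne_zero h1 h2) h3) (pow_ne_zero 2 h4)) h6),
      Y1'', Y3'', Y4'']
    field_simp
    ring_nf
    all_goals field_simp
    all_goals ring
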